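/- arXiv:1905.09707 — 2 statements merged into one kernel-verified Lean document; each statement's English description precedes it below -/
import Mathlib

section
/- (Probabilistic form of Theorem 1, accuracy enhancement without feedback.) Assume the Protocol 1 model with parameters ε, ε_c ∈ [0,1], τ > 0, σ_c ∈ (0, τ), σ > 0, μ > 0, an integer m ≥ 1 with μ = (m + 1/2)·τ, and P(X₁ ∈ (μ − σ/2, μ + σ/2)) ≥ 1 − ε with σ < 2μ/3. Let j ≥ 1 be an integer with j < (τ − σ_c)/(σ_c + σ) and j·σ ≥ μ/(m + 3/2). Then with probability at least 1 − j·ε − (j+1)·ε_c one has t^out_j − t^out_0 ∈ (j·μ − j·σ_c/2, j·μ + j·σ_c/2); consequently, the (j·ε + (j+1)·ε_c)-inaccuracy of the j-th output tick time t^out_j − t^out_0 satisfies Σ^out_j(j·ε + (j+1)·ε_c) ≤ j·σ_c/μ ≤ (5j²/6)·(σ/μ)·(2σ_c/τ). -/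
open MeasureTheory ProbabilityTheory Pointwise

/-- A Markov kernel `κ` from `ℝ` to `ℝ` satisfies the `(τ, σc, εc)`-**stability
criterion** if for every switch-on phase `s ∈ (−(τ−σc)/2, (τ−σc)/2)`, the waiting-time
distribution `κ(s)` assigns probability at least `1 − εc` to the set of waiting times
`y` with `y + s ∈ ((τ−σc)/2, (τ+σc)/2)`. -/
def StabilityCriterion (κ : Kernel ℝ ℝ) (τ σc εc : ℝ) : Prop :=
  ∀ s ∈ Set.Ioo (-((τ - σc) / 2)) ((τ - σc) / 2),
    ENNReal.ofReal (1 - εc) ≤ κ s {y | y + s ∈ Set.Ioo ((τ - σc) / 2) ((τ + σc) / 2)}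

/-- The phase of a period-`τ` clock at time `x`: the unique `s ∈ (−τ/2, τ/2]` such
that `x − s` is an integer multiple of `τ`. -/
noncomputable def phase (τ x : ℝ) : ℝ := x - τ * ⌈x / τ - 1 / 2⌉

/-- The σ-algebra generated by the input waiting times `X` together with the output
tick times `tout 0, …, tout (i−1)`; the conditioning σ-algebra for the `i`-th draw of
the enhancing clock in Protocol 1. -/
def protocolPast {Ω : Type*} [MeasurableSpace Ω] (X : ℕ → Ω → ℝ)
    (tout : ℕ → Ω → ℝ) (i : ℕ) : MeasurableSpace Ω :=
  (⨆ k, MeasurableSpace.comap (X k) inferInstance) ⊔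
    ⨆ l, ⨆ (_ : l < i), MeasurableSpace.comap (tout l) inferInstance

/-- The switch-on phase of the enhancing clock at the arrival of the `i`-th
(relevant) input tick in Protocol 1:  `s₀ = 0` (the clock starts in the reset state),
and for `i ≥ 1`, `sᵢ = t^in_i − t^out_{i−1} − mᵢ·τ` with `mᵢ` the unique integer making
`sᵢ ∈ (−τ/2, τ/2]`. -/
noncomputable def protocolPhase {Ω : Type*} (τ : ℝ) (tin tout : ℕ → Ω → ℝ)
    (i : ℕ) (ω : Ω) : ℝ :=
  if i = 0 then 0 else phase τ (tin i ω - tout (i - 1) ω)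

/-- **The Protocol 1 model** (accuracy enhancement without feedback).  It consists of:
(i) an i.i.d. sequence `(X_k)` of a.s. positive real random variables (input tick
waiting times) whose common distribution puts weight at least `1 − ε` on
`(μ − σ/2, μ + σ/2)`, with input tick times `u_k = X_1 + ⋯ + X_k`;
(ii) a Markov kernel `κ` satisfying the `(τ, σc, εc)`-stability criterion of the
enhancing clock, whose detector-off evolution has period `τ = μ/(m + 1/2)`;
(iii) random variables `t^in_0 = 0, t^in_1, …, t^in_j` and `t^out_0, …, t^out_j` such
that conditionally on `(X_k)` the waiting time `t^out_0` has law `κ(0)`, and for each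
`1 ≤ i ≤ j`, `t^in_i = min{u_k : u_k > t^out_{i−1}}` and, conditionally on `(X_k)` and
`t^out_0, …, t^out_{i−1}`, the increment `t^out_i − t^in_i` has law `κ(sᵢ)` where `sᵢ`
is the phase of `t^in_i − t^out_{i−1}` modulo `τ`. -/
structure Protocol1Model {Ω : Type*} [MeasurableSpace Ω] (P : Measure Ω)
    (ε εc τ σc σ μ : ℝ) (m : ℕ) (κ : Kernel ℝ ℝ)
    (X : ℕ → Ω → ℝ) (tin tout : ℕ → Ω → ℝ) (j : ℕ) : Prop where
  hε : ε ∈ Set.Icc (0 : ℝ) 1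
  hεc : εc ∈ Set.Icc (0 : ℝ) 1
  hτ : 0 < τ
  hσc : σc ∈ Set.Ioo 0 τ
  hσ : 0 < σ
  hμ : 0 < μ
  hm : 1 ≤ m
  hμτ : μ = (m + 1 / 2) * τ
  measX : ∀ k, Measurable (X k)
  meas_tin : ∀ i, Measurable (tin i)
  meas_tout : ∀ i, Measurable (tout i)
  indep : iIndepFun X P
  ident : ∀ k, IdentDistrib (X k) (X 0) P P
  pos : ∀ k, ∀ᵐ ω ∂P, 0 < X k ω
  conf : ENNReal.ofReal (1 - ε) ≤ P {ω | X 0 ω ∈ Set.Ioo (μ - σ / 2) (μ + σ / 2)}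
  markov : IsMarkovKernel κ
  stable : StabilityCriterion κ τ σc εc
  tin_zero : ∀ ω, tin 0 ω = 0
  tin_def : ∀ i, 1 ≤ i → i ≤ j → ∀ ω,
    tin i ω = sInf {t | (∃ k, t = ∑ l ∈ Finset.range k, X l ω) ∧ tout (i - 1) ω < t}
  cond_law : ∀ i ≤ j, ∀ B : Set ℝ, MeasurableSet B →
    ∀ A : Set Ω, MeasurableSet[protocolPast X tout i] A →
      P (A ∩ {ω | tout i ω - tin i ω ∈ B}) =
        ∫⁻ ω in A, κ (protocolPhase τ tin tout i ω) B ∂P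

/-- The `ε`-inaccuracy `Σ_j(ε)` of a random variable `S` interpreted as the time of the
`j`-th tick of a clock: the infimum of `j·σ/μ` over all `μ > 0` and `σ ≥ 0` such that
`S` lies in `[μ − σ/2, μ + σ/2]` with probability at least `1 − ε`; it is `+∞` if no
such pair exists. -/
noncomputable def inaccuracy {Ω : Type*} [MeasurableSpace Ω] (P : Measure Ω)
    (S : Ω → ℝ) (j : ℕ) (ε : ℝ) : ENNReal :=
  ⨅ (μ : ℝ) (σ : ℝ) (_ : 0 < μ) (_ : 0 ≤ σ)
    (_ : ENNReal.ofReal (1 - ε) ≤ P {ω | S ω ∈ Set.Icc (μ - σ / 2) (μ + σ / 2)}),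
    ENNReal.ofReal (j * σ / μ)


section Aux

open MeasureTheory ProbabilityTheory

lemma measurable_phase (τ : ℝ) : Measurable (phase τ) := by
  unfold phase
  have h1 : Measurable fun x : ℝ => x / τ - 1 / 2 :=
    (measurable_id.div_const τ).sub measurable_const
  have h2 : Measurable fun x : ℝ => (⌈x / τ - 1 / 2⌉ : ℝ) :=
    measurable_from_top.comp (Int.measurable_ceil.comp h1)
  exact measurable_id.sub (measurable_const.mul h2)

lemma phase_eq (τ : ℝ) (hτ : 0 < τ) (k : ℤ) (e : ℝ) (h1 : -(τ/2) < e) (h2 : e ≤ τ/2) :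
    phase τ (k * τ + e) = e := by
  have hne : (τ:ℝ) ≠ 0 := ne_of_gt hτ
  have harg : ((k:ℝ) * τ + e) / τ - 1/2 = (e/τ - 1/2) + (k:ℝ) := by field_simp; ring
  have hb1 : (-1/2 : ℝ) < e/τ := by rw [lt_div_iff₀ hτ]; nlinarith
  have hb2 : e/τ ≤ 1/2 := by rw [div_le_iff₀ hτ]; nlinarith
  have hball : ⌈(e/τ - 1/2 : ℝ)⌉ = 0 := by
    rw [Int.ceil_eq_zero_iff, Set.mem_Ioc]
    constructor <;> [linarith; linarith]
  have hceil : ⌈((k:ℝ) * τ + e) / τ - 1/2⌉ = k := by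
    rw [harg, Int.ceil_add_intCast, hball, zero_add]
  unfold phase
  rw [hceil]; ring

lemma cond_step {Ω : Type*} [mΩ : MeasurableSpace Ω] (P : Measure Ω) [IsProbabilityMeasure P]
    (κ : Kernel ℝ ℝ) [IsMarkovKernel κ] (𝓕 : MeasurableSpace Ω) (h𝓕 : 𝓕 ≤ mΩ)
    (S Y : Ω → ℝ) (hS : Measurable[𝓕] S) (hY : Measurable[mΩ] Y)
    (A₀ : Set Ω) (hA₀ : MeasurableSet[𝓕] A₀)
    (hcond : ∀ B : Set ℝ, MeasurableSet B → ∀ A : Set Ω, MeasurableSet[𝓕] A → A ⊆ A₀ →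
      P (A ∩ {ω | Y ω ∈ B}) = ∫⁻ ω in A, κ (S ω) B ∂P)
    {C : Set (ℝ × ℝ)} (hC : MeasurableSet C) :
    P (A₀ ∩ {ω | (S ω, Y ω) ∈ C}) = ∫⁻ ω in A₀, κ (S ω) {y | (S ω, y) ∈ C} ∂P := by
  have hSm : Measurable[mΩ] S := hS.mono h𝓕 le_rfl
  have hA₀m : MeasurableSet[mΩ] A₀ := h𝓕 _ hA₀
  have hker : ∀ {C : Set (ℝ × ℝ)}, MeasurableSet C →
      Measurable[mΩ] fun ω => κ (S ω) {y | (S ω, y) ∈ C} := fun hC =>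
    (Kernel.measurable_kernel_prodMk_left hC).comp hSm
  revert hC
  refine fun hC => MeasurableSpace.induction_on_inter (C := fun C _ =>
      P (A₀ ∩ {ω | (S ω, Y ω) ∈ C}) = ∫⁻ ω in A₀, κ (S ω) {y | (S ω, y) ∈ C} ∂P)
    generateFrom_prod.symm isPiSystem_prod ?_ ?_ ?_ ?_ _ hC
  · simp
  · rintro t ⟨B₁, h₁, B₂, h₂, rfl⟩
    have hsplit : A₀ ∩ {ω | (S ω, Y ω) ∈ B₁ ×ˢ B₂} = (A₀ ∩ S ⁻¹' B₁) ∩ {ω | Y ω ∈ B₂} := by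
      ext ω
      simp only [Set.mem_inter_iff, Set.mem_setOf_eq, Set.mem_prod, Set.mem_preimage]
      tauto
    rw [hsplit, hcond B₂ h₂ _ (hA₀.inter (hS h₁)) Set.inter_subset_left]
    have hslice : ∀ ω, κ (S ω) {y | (S ω, y) ∈ B₁ ×ˢ B₂}
        = (S ⁻¹' B₁).indicator (fun ω => κ (S ω) B₂) ω := by
      intro ω
      by_cases h : S ω ∈ B₁
      · rw [Set.indicator_of_mem (show ω ∈ S ⁻¹' B₁ from h)]
        congr 1; ext y; simp [Set.mem_prod, h]
      · rw [Set.indicator_of_notMem (show ω ∉ S ⁻¹' B₁ from h)]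
        convert measure_empty
        · ext y; simp [Set.mem_prod, h]
        · infer_instance
    calc ∫⁻ ω in A₀ ∩ S ⁻¹' B₁, κ (S ω) B₂ ∂P
        = ∫⁻ ω in A₀, (S ⁻¹' B₁).indicator (fun ω => κ (S ω) B₂) ω ∂P := by
          rw [lintegral_indicator (hSm h₁), Measure.restrict_restrict (hSm h₁), Set.inter_comm]
      _ = ∫⁻ ω in A₀, κ (S ω) {y | (S ω, y) ∈ B₁ ×ˢ B₂} ∂P :=
          lintegral_congr fun ω => (hslice ω).symm
  · intro t htm iht
    have h1 : A₀ ∩ {ω | (S ω, Y ω) ∈ tᶜ} = A₀ \ (A₀ ∩ {ω | (S ω, Y ω) ∈ t}) := by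
      ext ω
      simp only [Set.mem_inter_iff, Set.mem_setOf_eq, Set.mem_compl_iff, Set.mem_diff]
      tauto
    have hev : MeasurableSet[mΩ] (A₀ ∩ {ω | (S ω, Y ω) ∈ t}) :=
      hA₀m.inter ((hSm.prodMk hY) htm)
    have hfin : P (A₀ ∩ {ω | (S ω, Y ω) ∈ t}) ≠ ⊤ := measure_ne_top P _
    rw [h1, measure_diff Set.inter_subset_left hev.nullMeasurableSet hfin, iht]
    have hslice : ∀ ω, κ (S ω) {y | (S ω, y) ∈ tᶜ} = 1 - κ (S ω) {y | (S ω, y) ∈ t} := by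
      intro ω
      exact prob_compl_eq_one_sub (measurable_prodMk_left htm)
    rw [lintegral_congr hslice, @lintegral_sub Ω mΩ _ _ _ (hker htm) (by
        exact ne_top_of_le_ne_top (measure_ne_top P A₀) (by
          calc ∫⁻ ω in A₀, κ (S ω) {y | (S ω, y) ∈ t} ∂P ≤ ∫⁻ _ in A₀, 1 ∂P :=
              lintegral_mono fun ω => prob_le_one
            _ = P A₀ := by simp))
      (Filter.Eventually.of_forall fun ω => prob_le_one)]
    simp
  · intro f hdisj hfm ihf
    have h1 : A₀ ∩ {ω | (S ω, Y ω) ∈ ⋃ i, f i} = ⋃ i, A₀ ∩ {ω | (S ω, Y ω) ∈ f i} := by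
      ext ω; simp
    have hdisj2 : Pairwise (Function.onFun Disjoint fun i => A₀ ∩ {ω | (S ω, Y ω) ∈ f i}) :=
      fun a b hab => (((hdisj hab).preimage fun ω => (S ω, Y ω)).mono
        Set.inter_subset_right Set.inter_subset_right)
    rw [h1, measure_iUnion hdisj2 (fun i => hA₀m.inter ((hSm.prodMk hY) (hfm i)))]
    have hslice : ∀ ω, κ (S ω) {y | (S ω, y) ∈ ⋃ i, f i}
        = ∑' i, κ (S ω) {y | (S ω, y) ∈ f i} := by
      intro ω
      rw [show {y | (S ω, y) ∈ ⋃ i, f i} = ⋃ i, {y | (S ω, y) ∈ f i} from by ext y; simp]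
      exact measure_iUnion (fun a b hab => (hdisj hab).preimage (Prod.mk (S ω)))
        (fun i => measurable_prodMk_left (hfm i))
    rw [lintegral_congr hslice, lintegral_tsum (fun i => ((hker (hfm i)).aemeasurable).restrict)]
    exact tsum_congr ihf

end Aux


lemma compl_bound {Ω : Type*} [MeasurableSpace Ω] (P : MeasureTheory.Measure Ω)
    [MeasureTheory.IsProbabilityMeasure P] {A : Set Ω} (hA : MeasurableSet A) {x : ℝ}
    (hx0 : 0 ≤ x) (h : ENNReal.ofReal (1 - x) ≤ P A) : P Aᶜ ≤ ENNReal.ofReal x := by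
  rw [MeasureTheory.measure_compl hA (MeasureTheory.measure_ne_top _ _),
    MeasureTheory.measure_univ]
  refine tsub_le_iff_right.2 ?_
  calc (1:ENNReal) = ENNReal.ofReal (x + (1-x)) := by norm_num
    _ ≤ ENNReal.ofReal x + ENNReal.ofReal (1-x) := ENNReal.ofReal_add_le
    _ ≤ _ := add_le_add_right h _

set_option maxHeartbeats 2000000 in
/-- **Accuracy enhancement without feedback** (probabilistic form of Theorem 1).
Assume the Protocol 1 model with parameters `ε, εc ∈ [0,1]`, `τ > 0`, `σc ∈ (0, τ)`,
`σ > 0`, `μ > 0`, an integer `m ≥ 1` with `μ = (m + 1/2)·τ`, and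
`P(X₁ ∈ (μ − σ/2, μ + σ/2)) ≥ 1 − ε` with `σ < 2μ/3`.  Let `j ≥ 1` be an integer with
`j < (τ − σc)/(σc + σ)` and `j·σ ≥ μ/(m + 3/2)`.  Then with probability at least
`1 − j·ε − (j+1)·εc` one has
`t^out_j − t^out_0 ∈ (j·μ − j·σc/2, j·μ + j·σc/2)`; consequently, the
`(j·ε + (j+1)·εc)`-inaccuracy of the `j`-th output tick time `t^out_j − t^out_0`
satisfies `Σ^out_j(j·ε + (j+1)·εc) ≤ j·σc/μ ≤ (5j²/6)·(σ/μ)·(2σc/τ)`. -/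
theorem protocol1_accuracy_enhancement {Ω : Type*} [MeasurableSpace Ω]
    (P : Measure Ω) [IsProbabilityMeasure P]
    (ε εc τ σc σ μ : ℝ) (m : ℕ) (κ : Kernel ℝ ℝ)
    (X : ℕ → Ω → ℝ) (tin tout : ℕ → Ω → ℝ) (j : ℕ)
    (hmodel : Protocol1Model P ε εc τ σc σ μ m κ X tin tout j)
    (hσμ : σ < 2 * μ / 3) (hj : 1 ≤ j)
    (hjlt : (j : ℝ) < (τ - σc) / (σc + σ))
    (hjσ : μ / (m + 3 / 2) ≤ j * σ) :
    ENNReal.ofReal (1 - j * ε - (j + 1) * εc) ≤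
        P {ω | tout j ω - tout 0 ω ∈
          Set.Ioo (j * μ - j * σc / 2) (j * μ + j * σc / 2)} ∧
      inaccuracy P (fun ω => tout j ω - tout 0 ω) j (j * ε + (j + 1) * εc) ≤
        ENNReal.ofReal (j * σc / μ) ∧
      j * σc / μ ≤ (5 * j ^ 2 / 6) * (σ / μ) * (2 * σc / τ) := by
  obtain ⟨hε, hεc, hτ, hσc, hσ, hμ, hm, hμτ, measX, meas_tin, meas_tout, indep, ident,
    pos, conf, markov, stable, tin_zero, tin_def, cond_law⟩ := hmodel
  haveI := markov
  -- basic scalar facts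
  have hm1 : (1:ℝ) ≤ m := by exact_mod_cast hm
  have hστ : 0 < σc + σ := by linarith [hσc.1]
  have hjτ : (j:ℝ) * (σc + σ) < τ - σc := by
    rwa [lt_div_iff₀ hστ] at hjlt
  have hj1 : (1:ℝ) ≤ j := by exact_mod_cast hj
  -- the deterministic objects
  set u : ℕ → Ω → ℝ := fun k ω => ∑ l ∈ Finset.range k, X l ω with hu
  set ΩP : Set Ω := {ω | ∀ k, 0 < X k ω} with hΩP
  set BX : Set Ω := {ω | ∀ k, k < j → X k ω ∈ Set.Ioo (μ - σ/2) (μ + σ/2)} with hBX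
  set D : ℕ → Set Ω := fun l =>
    if l = 0 then {ω | tout 0 ω ∈ Set.Ioo ((τ - σc)/2) ((τ + σc)/2)}
    else {ω | tout l ω - tout (l-1) ω ∈ Set.Ioo (μ - σc/2) (μ + σc/2)} with hD
  set G : ℕ → Set Ω := fun i => (ΩP ∩ BX) ∩ ⋂ l ∈ Finset.range (i+1), D l with hG
  -- measurability of the building blocks
  have hphase : ∀ i, Measurable (protocolPhase τ tin tout i) := by
    intro i
    unfold protocolPhase
    by_cases h : i = 0
    · simp [h]
    · simp only [h, if_false]
      exact (measurable_phase τ).comp ((meas_tin i).sub (meas_tout (i-1)))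
  have humeas : ∀ k, Measurable (u k) := fun k => Finset.measurable_sum _ fun l _ => measX l
  have hDmeas : ∀ l, MeasurableSet (D l) := by
    intro l
    by_cases h : l = 0
    · simp only [hD, h, if_pos]
      exact (meas_tout 0) measurableSet_Ioo
    · simp only [hD, h, if_false]
      exact ((meas_tout l).sub (meas_tout (l-1))) measurableSet_Ioo
  have hΩPmeas : MeasurableSet ΩP := by
    have : ΩP = ⋂ k, {ω | 0 < X k ω} := by ext ω; simp [hΩP]
    rw [this]; exact MeasurableSet.iInter fun k => measurableSet_lt measurable_const (measX k)
  have hBXmeas : MeasurableSet BX := by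
    have : BX = ⋂ k, ⋂ (_ : k < j), {ω | X k ω ∈ Set.Ioo (μ - σ/2) (μ + σ/2)} := by
      ext ω; simp [hBX]
    rw [this]
    exact MeasurableSet.iInter fun k => MeasurableSet.iInter fun _ => (measX k) measurableSet_Ioo
  have hGmeas : ∀ i, MeasurableSet (G i) := fun i =>
    (hΩPmeas.inter hBXmeas).inter (Finset.measurableSet_biInter _ fun l _ => hDmeas l)
  -- sub-σ-algebra facts
  have hpast_le : ∀ i, protocolPast X tout i ≤ (by infer_instance : MeasurableSpace Ω) := by
    intro i
    apply sup_le
    · exact iSup_le fun k => measurable_iff_comap_le.1 (measX k)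
    · exact iSup_le fun l => iSup_le fun _ => measurable_iff_comap_le.1 (meas_tout l)
  have hXF : ∀ i k, Measurable[protocolPast X tout i] (X k) := by
    intro i k
    rw [measurable_iff_comap_le]
    exact le_trans (le_iSup (fun k => MeasurableSpace.comap (X k) inferInstance) k) le_sup_left
  have htoutF : ∀ i l, l < i → Measurable[protocolPast X tout i] (tout l) := by
    intro i l hl
    rw [measurable_iff_comap_le]
    refine le_trans ?_ le_sup_right
    exact le_trans (le_iSup₂ (f := fun l (_ : l < i) =>
      MeasurableSpace.comap (tout l) inferInstance) l hl) le_rfl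
  have huF : ∀ i k, Measurable[protocolPast X tout i] (u k) :=
    fun i k => Finset.measurable_sum _ fun l _ => hXF i l
  have hΩPF : ∀ i, MeasurableSet[protocolPast X tout i] ΩP := by
    intro i
    have : ΩP = ⋂ k, {ω | 0 < X k ω} := by ext ω; simp [hΩP]
    rw [this]
    exact MeasurableSet.iInter fun k => measurableSet_lt measurable_const (hXF i k)
  have hBXF : ∀ i, MeasurableSet[protocolPast X tout i] BX := by
    intro i
    have : BX = ⋂ k, ⋂ (_ : k < j), {ω | X k ω ∈ Set.Ioo (μ - σ/2) (μ + σ/2)} := by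
      ext ω; simp [hBX]
    rw [this]
    exact MeasurableSet.iInter fun k => MeasurableSet.iInter fun _ => (hXF i k) measurableSet_Ioo
  have hDF : ∀ i l, l < i → MeasurableSet[protocolPast X tout i] (D l) := by
    intro i l hl
    by_cases h : l = 0
    · simp only [hD, h, if_pos]
      exact (htoutF i 0 (h ▸ hl)) measurableSet_Ioo
    · simp only [hD, h, if_false]
      exact ((htoutF i l hl).sub (htoutF i (l-1) (by omega))) measurableSet_Ioo
  have hGF : ∀ i, MeasurableSet[protocolPast X tout (i+1)] (G i) := by
    intro i
    exact ((hΩPF (i+1)).inter (hBXF (i+1))).inter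
      (Finset.measurableSet_biInter _ fun l hl => hDF (i+1) l (Finset.mem_range.1 hl))
  -- G is antitone and G (i+1) = G i ∩ D (i+1)
  have hGsucc : ∀ i, G (i+1) = G i ∩ D (i+1) := by
    intro i
    simp only [hG, Finset.range_add_one (n := i+1)]
    rw [Finset.set_biInter_insert]
    ext ω; simp only [Set.mem_inter_iff, Set.mem_iInter]; tauto
  have hGmono : ∀ i, G (i+1) ⊆ G i := fun i => by
    rw [hGsucc i]; exact Set.inter_subset_left
  have hGD : ∀ i l, l ≤ i → ∀ ω, ω ∈ G i → ω ∈ D l := by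
    intro i l hl ω hω
    have h2 := hω.2
    simp only [Set.mem_iInter] at h2
    exact h2 l (Finset.mem_range.2 (by omega))
  have husucc : ∀ k (ω : Ω), u (k+1) ω = u k ω + X k ω := by
    intro k ω; simp [hu, Finset.sum_range_succ]
  have hu0 : ∀ ω : Ω, u 0 ω = 0 := by intro ω; simp [hu]
  have hci : ∀ i : ℕ, i < j → (σc + (i:ℝ)*(σ+σc))/2 + σ/2 < (τ - σc)/2 := by
    intro i hi
    have hij : ((i:ℝ)+1) ≤ (j:ℝ) := by exact_mod_cast (by omega : i+1 ≤ j)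
    nlinarith [hjτ, hστ]
  -- deterministic facts
  have hC1 : ∀ i, i ≤ j → ∀ ω ∈ G i, |tout i ω - u i ω - τ/2| < (σc + i*(σ+σc))/2 := by
    intro i
    induction i with
    | zero =>
      intro _ ω hω
      have hD0' := hGD 0 0 le_rfl ω hω
      simp only [hD, if_pos] at hD0'
      obtain ⟨h1, h2⟩ := hD0'
      rw [hu0 ω, abs_lt]
      push_cast
      constructor <;> [linarith; linarith]
    | succ i ih =>
      intro hij ω hω
      have hωi : ω ∈ G i := hGmono i hω
      have hd := ih (by omega) ω hωi
      have hXi : X i ω ∈ Set.Ioo (μ - σ/2) (μ + σ/2) := hω.1.2 i (by omega)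
      have hDi := hGD (i+1) (i+1) le_rfl ω hω
      simp only [hD, Nat.succ_ne_zero, if_false, Nat.add_sub_cancel] at hDi
      obtain ⟨hd1, hd2⟩ := hDi
      obtain ⟨hx1, hx2⟩ := hXi
      rw [abs_lt] at hd ⊢
      rw [husucc i ω]
      push_cast
      push_cast at hd
      constructor <;> [linarith; linarith]
  have hC2 : ∀ i, i < j → ∀ ω ∈ G i, tin (i+1) ω = u (i+1) ω := by
    intro i hi ω hω
    have hd := hC1 i (le_of_lt hi) ω hω
    rw [abs_lt] at hd
    have hcii := hci i hi
    have hpos : ∀ k, 0 < X k ω := hω.1.1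
    have humono : StrictMono (fun k => u k ω) :=
      strictMono_nat_of_lt_succ (fun k => by rw [husucc k ω]; linarith [hpos k])
    have hXi : X i ω ∈ Set.Ioo (μ - σ/2) (μ + σ/2) := hω.1.2 i hi
    have hmτ : μ - τ/2 = (m:ℝ) * τ := by rw [hμτ]; ring
    have hTlt : tout i ω < u (i+1) ω := by
      rw [husucc i ω]
      have h2' : (σc + (i:ℝ)*(σ+σc))/2 + σ/2 < τ/2 := by
        refine lt_trans hcii ?_; linarith [hσc.1]
      nlinarith [hd.2, hXi.1, hm1, hτ]
    have hTgt : u i ω < tout i ω := by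
      have h2' : (σc + (i:ℝ)*(σ+σc))/2 < τ/2 := by
        have := hci i hi
        linarith [hσ, hσc.1]
      linarith [hd.1]
    have hleast : IsLeast {t | (∃ k, t = ∑ l ∈ Finset.range k, X l ω) ∧ tout i ω < t}
        (u (i+1) ω) := by
      constructor
      · exact ⟨⟨i+1, rfl⟩, hTlt⟩
      · rintro t ⟨⟨k, rfl⟩, ht⟩
        change u (i+1) ω ≤ u k ω
        by_contra hcon
        push_neg at hcon
        have hk : k ≤ i := by
          by_contra hk2
          push_neg at hk2
          exact absurd (humono.monotone hk2) (not_le.2 hcon)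
        have hki : u k ω ≤ u i ω := humono.monotone hk
        change tout i ω < u k ω at ht
        linarith
    rw [tin_def (i+1) (by omega) (by omega) ω]
    simp only [Nat.add_sub_cancel]
    exact hleast.csInf_eq
  have hC3 : ∀ i, i < j → ∀ ω ∈ G i,
      protocolPhase τ tin tout (i+1) ω = X i ω - μ - (tout i ω - u i ω - τ/2) ∧
      protocolPhase τ tin tout (i+1) ω ∈ Set.Ioo (-((τ - σc)/2)) ((τ - σc)/2) := by
    intro i hi ω hω
    have hd := hC1 i (le_of_lt hi) ω hω
    rw [abs_lt] at hd
    have hcii := hci i hi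
    have hXi : X i ω ∈ Set.Ioo (μ - σ/2) (μ + σ/2) := hω.1.2 i hi
    have hebound : -((τ - σc)/2) < X i ω - μ - (tout i ω - u i ω - τ/2) ∧
        X i ω - μ - (tout i ω - u i ω - τ/2) < (τ - σc)/2 := by
      obtain ⟨hx1, hx2⟩ := hXi
      constructor <;> [linarith [hd.2]; linarith [hd.1]]
    have hτσc : (τ - σc)/2 < τ/2 := by linarith [hσc.1]
    have harg : u (i+1) ω - tout i ω
        = ((m:ℤ):ℝ) * τ + (X i ω - μ - (tout i ω - u i ω - τ/2)) := by
      rw [husucc i ω, hμτ]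
      push_cast
      ring
    have heq : protocolPhase τ tin tout (i+1) ω = X i ω - μ - (tout i ω - u i ω - τ/2) := by
      show (if i+1 = 0 then (0:ℝ) else phase τ (tin (i+1) ω - tout (i+1-1) ω)) = _
      rw [if_neg (Nat.succ_ne_zero i)]
      simp only [Nat.add_sub_cancel]
      rw [hC2 i hi ω hω, harg]
      exact phase_eq τ hτ m _ (by linarith [hebound.1]) (by linarith [hebound.2])
    refine ⟨heq, ?_⟩
    rw [heq]
    exact ⟨hebound.1, hebound.2⟩
  have hC4 : ∀ i, i < j → ∀ ω ∈ G i,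
      (tout (i+1) ω - tin (i+1) ω) + protocolPhase τ tin tout (i+1) ω ∈
        Set.Ioo ((τ - σc)/2) ((τ + σc)/2) → ω ∈ D (i+1) := by
    intro i hi ω hω hmem
    have h2 := hC2 i hi ω hω
    have h3 := (hC3 i hi ω hω).1
    rw [h2, h3, husucc i ω] at hmem
    obtain ⟨hl, hr⟩ := hmem
    show ω ∈ (if i+1 = 0 then _ else _)
    rw [if_neg (Nat.succ_ne_zero i)]
    simp only [Set.mem_setOf_eq, Nat.add_sub_cancel]
    constructor <;> [linarith; linarith]
  -- probability of G 0
  have hident : ∀ k, P {ω | X k ω ∈ Set.Ioo (μ - σ/2) (μ + σ/2)}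
      = P {ω | X 0 ω ∈ Set.Ioo (μ - σ/2) (μ + σ/2)} := by
    intro k
    have h1 : P {ω | X k ω ∈ Set.Ioo (μ - σ/2) (μ + σ/2)}
        = (P.map (X k)) (Set.Ioo (μ - σ/2) (μ + σ/2)) := by
      rw [Measure.map_apply (measX k) measurableSet_Ioo]; rfl
    have h2 : P {ω | X 0 ω ∈ Set.Ioo (μ - σ/2) (μ + σ/2)}
        = (P.map (X 0)) (Set.Ioo (μ - σ/2) (μ + σ/2)) := by
      rw [Measure.map_apply (measX 0) measurableSet_Ioo]; rfl
    rw [h1, h2, (ident k).map_eq]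
  have hXfail : ∀ k, P {ω | X k ω ∈ Set.Ioo (μ - σ/2) (μ + σ/2)}ᶜ ≤ ENNReal.ofReal ε := by
    intro k
    have hle : ENNReal.ofReal (1 - ε) ≤ P {ω | X k ω ∈ Set.Ioo (μ - σ/2) (μ + σ/2)} :=
      (hident k) ▸ conf
    have hms : MeasurableSet {ω | X k ω ∈ Set.Ioo (μ - σ/2) (μ + σ/2)} :=
      (measX k) measurableSet_Ioo
    exact compl_bound P hms hε.1 hle
  have hBXc : P BXᶜ ≤ (j:ENNReal) * ENNReal.ofReal ε := by
    have hsub : BXᶜ ⊆ ⋃ k ∈ Finset.range j, {ω | X k ω ∈ Set.Ioo (μ - σ/2) (μ + σ/2)}ᶜ := by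
      intro ω hω
      simp only [hBX, Set.mem_compl_iff, Set.mem_setOf_eq, not_forall] at hω
      obtain ⟨k, hk, hkn⟩ := hω
      exact Set.mem_biUnion (Finset.mem_range.2 hk) hkn
    calc P BXᶜ ≤ ∑ k ∈ Finset.range j, P {ω | X k ω ∈ Set.Ioo (μ - σ/2) (μ + σ/2)}ᶜ :=
          le_trans (measure_mono hsub) (measure_biUnion_finset_le _ _)
      _ ≤ ∑ _k ∈ Finset.range j, ENNReal.ofReal ε := Finset.sum_le_sum fun k _ => hXfail k
      _ = (j:ENNReal) * ENNReal.ofReal ε := by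
          rw [Finset.sum_const, Finset.card_range, nsmul_eq_mul]
  have hΩPc : P ΩPᶜ = 0 := by
    have hsub : ΩPᶜ ⊆ ⋃ k, {ω | ¬ 0 < X k ω} := by
      intro ω hω
      simp only [hΩP, Set.mem_compl_iff, Set.mem_setOf_eq, not_forall] at hω
      obtain ⟨k, hk⟩ := hω
      exact Set.mem_iUnion.2 ⟨k, hk⟩
    refine le_antisymm (le_trans (measure_mono hsub) ?_) zero_le
    rw [measure_iUnion_null_iff.2]
    intro k
    have := pos k
    rw [ae_iff] at this
    exact this
  -- P (D 0) ≥ 1 - εc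
  have hD0 : ENNReal.ofReal (1 - εc) ≤ P (D 0) := by
    have h0mem : (0:ℝ) ∈ Set.Ioo (-((τ - σc)/2)) ((τ - σc)/2) := by
      constructor
      · simp only [neg_lt, neg_zero]; linarith [hσc.2]
      · linarith [hσc.2]
    have hcl := cond_law 0 (Nat.zero_le j) (Set.Ioo ((τ - σc)/2) ((τ + σc)/2)) measurableSet_Ioo
      Set.univ MeasurableSet.univ
    simp only [Set.univ_inter] at hcl
    have hphase0 : ∀ ω : Ω, protocolPhase τ tin tout 0 ω = 0 := fun ω => if_pos rfl
    have hstab := stable 0 h0mem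
    have hset : {y : ℝ | y + 0 ∈ Set.Ioo ((τ - σc)/2) ((τ + σc)/2)}
        = Set.Ioo ((τ - σc)/2) ((τ + σc)/2) := by ext y; simp
    rw [hset] at hstab
    have hint : ∫⁻ ω in Set.univ, κ (protocolPhase τ tin tout 0 ω)
        (Set.Ioo ((τ - σc)/2) ((τ + σc)/2)) ∂P
        = κ 0 (Set.Ioo ((τ - σc)/2) ((τ + σc)/2)) := by
      rw [lintegral_congr (fun ω => by rw [hphase0 ω]), setLIntegral_const,
        measure_univ, mul_one]
    have hev : {ω | tout 0 ω - tin 0 ω ∈ Set.Ioo ((τ - σc)/2) ((τ + σc)/2)} = D 0 := by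
      ext ω
      simp only [hD, if_pos, Set.mem_setOf_eq, tin_zero ω, sub_zero]
    rw [hev, hint] at hcl
    rw [hcl]
    exact hstab
  -- base: P (G 0)
  have hG0 : ENNReal.ofReal (1 - (j:ℝ)*ε - εc) ≤ P (G 0) := by
    rcases le_or_gt (1 - (j:ℝ)*ε - εc) 0 with h | h
    · rw [ENNReal.ofReal_of_nonpos h]; exact zero_le
    · have hD0c : P (D 0)ᶜ ≤ ENNReal.ofReal εc := compl_bound P (hDmeas 0) hεc.1 hD0
      have hje : (j:ENNReal) * ENNReal.ofReal ε = ENNReal.ofReal ((j:ℝ)*ε) := by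
        rw [ENNReal.ofReal_mul (by positivity : (0:ℝ) ≤ (j:ℝ)), ENNReal.ofReal_natCast]
      have hGc : P (G 0)ᶜ ≤ ENNReal.ofReal ((j:ℝ)*ε) + ENNReal.ofReal εc := by
        have hsub : (G 0)ᶜ ⊆ ΩPᶜ ∪ (BXᶜ ∪ (D 0)ᶜ) := by
          intro ω hω
          simp only [hG, Set.mem_compl_iff, Set.mem_inter_iff, Set.mem_iInter, not_and,
            not_forall, Set.mem_union] at hω ⊢
          by_cases h1 : ω ∈ ΩP
          · by_cases h2 : ω ∈ BX
            · right; right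
              obtain ⟨l, hl, hnl⟩ := hω ⟨h1, h2⟩
              have hl0 : l = 0 := by
                have := Finset.mem_range.1 hl; omega
              rw [← hl0]; exact hnl
            · right; left; exact h2
          · left; exact h1
        calc P (G 0)ᶜ ≤ P ΩPᶜ + (P BXᶜ + P (D 0)ᶜ) :=
              le_trans (measure_mono hsub) (le_trans (measure_union_le _ _)
                (add_le_add_right (measure_union_le _ _) _))
          _ ≤ 0 + ((j:ENNReal) * ENNReal.ofReal ε + ENNReal.ofReal εc) :=
              add_le_add (le_of_eq hΩPc) (add_le_add hBXc hD0c)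
          _ = ENNReal.ofReal ((j:ℝ)*ε) + ENNReal.ofReal εc := by rw [zero_add, hje]
      have hone : (1:ENNReal) ≤ P (G 0) + (ENNReal.ofReal ((j:ℝ)*ε) + ENNReal.ofReal εc) := by
        calc (1:ENNReal) = P Set.univ := measure_univ.symm
          _ ≤ P ((G 0) ∪ (G 0)ᶜ) := by rw [Set.union_compl_self]
          _ ≤ P (G 0) + P (G 0)ᶜ := measure_union_le _ _
          _ ≤ _ := add_le_add_right hGc _
      have hsum : ENNReal.ofReal (1 - (j:ℝ)*ε - εc)
          + (ENNReal.ofReal ((j:ℝ)*ε) + ENNReal.ofReal εc) = 1 := by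
        rw [← ENNReal.ofReal_add (mul_nonneg (Nat.cast_nonneg j) hε.1) hεc.1,
          ← ENNReal.ofReal_add (le_of_lt h)
            (add_nonneg (mul_nonneg (Nat.cast_nonneg j) hε.1) hεc.1),
          show 1 - (j:ℝ)*ε - εc + ((j:ℝ)*ε + εc) = 1 by ring, ENNReal.ofReal_one]
      have hfin : ENNReal.ofReal ((j:ℝ)*ε) + ENNReal.ofReal εc ≠ ⊤ :=
        ENNReal.add_ne_top.2 ⟨ENNReal.ofReal_ne_top, ENNReal.ofReal_ne_top⟩
      have hone2 := hsum ▸ hone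
      exact (ENNReal.add_le_add_iff_right hfin).1 hone2
  -- induction step
  have hstep : ∀ i, i < j → P (G i) ≤ P (G (i+1)) + ENNReal.ofReal εc := by
    intro i hi
    set S : Ω → ℝ := fun ω => phase τ (u (i+1) ω - tout i ω) with hS
    set Y : Ω → ℝ := fun ω => tout (i+1) ω - tin (i+1) ω with hY
    set C : Set (ℝ × ℝ) := {p : ℝ × ℝ | p.2 + p.1 ∈ Set.Ioo ((τ - σc)/2) ((τ + σc)/2)} with hC
    have hCmeas : MeasurableSet C :=
      (measurable_snd.add measurable_fst) measurableSet_Ioo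
    have hSF : Measurable[protocolPast X tout (i+1)] S :=
      (measurable_phase τ).comp ((huF (i+1) (i+1)).sub (htoutF (i+1) i (Nat.lt_succ_self i)))
    have hSeq : ∀ ω ∈ G i, S ω = protocolPhase τ tin tout (i+1) ω := by
      intro ω hω
      simp only [hS, protocolPhase, Nat.succ_ne_zero, if_false, Nat.add_sub_cancel]
      rw [hC2 i hi ω hω]
    have hcond : ∀ B : Set ℝ, MeasurableSet B → ∀ A : Set Ω,
        MeasurableSet[protocolPast X tout (i+1)] A → A ⊆ G i →
        P (A ∩ {ω | Y ω ∈ B}) = ∫⁻ ω in A, κ (S ω) B ∂P := by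
      intro B hB A hA hAsub
      rw [cond_law (i+1) (by omega) B hB A hA]
      refine setLIntegral_congr_fun (hpast_le (i+1) _ hA) ?_
      exact fun ω hω => by rw [hSeq ω (hAsub hω)]
    have key := cond_step P κ (protocolPast X tout (i+1)) (hpast_le (i+1)) S Y hSF
      ((meas_tout (i+1)).sub (meas_tin (i+1))) (G i) (hGF i) hcond hCmeas
    have hlow : ENNReal.ofReal (1 - εc) * P (G i) ≤ P (G i ∩ {ω | (S ω, Y ω) ∈ C}) := by
      rw [key]
      have hges : ∀ ω ∈ G i, ENNReal.ofReal (1 - εc) ≤ κ (S ω) {y | (S ω, y) ∈ C} := by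
        intro ω hω
        have hmem := (hC3 i hi ω hω).2
        rw [← hSeq ω hω] at hmem
        exact stable (S ω) hmem
      calc ENNReal.ofReal (1 - εc) * P (G i)
          = ∫⁻ _ in G i, ENNReal.ofReal (1 - εc) ∂P := by
            rw [setLIntegral_const]
        _ ≤ ∫⁻ ω in G i, κ (S ω) {y | (S ω, y) ∈ C} ∂P :=
            setLIntegral_mono ((Kernel.measurable_kernel_prodMk_left hCmeas).comp
              (hSF.mono (hpast_le (i+1)) le_rfl)) hges
    have hsubset : G i ∩ {ω | (S ω, Y ω) ∈ C} ⊆ G (i+1) := by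
      intro ω hω
      rw [hGsucc i]
      refine ⟨hω.1, ?_⟩
      apply hC4 i hi ω hω.1
      have hm2 := hω.2
      simp only [hC, Set.mem_setOf_eq] at hm2
      rwa [hSeq ω hω.1] at hm2
    calc P (G i) ≤ ENNReal.ofReal (1 - εc) * P (G i) + ENNReal.ofReal εc := by
          rcases le_or_gt (P (G i)) (ENNReal.ofReal (1 - εc) * P (G i) + ENNReal.ofReal εc)
            with h | h
          · exact h
          · exfalso
            have h1 : ENNReal.ofReal (1 - εc) + ENNReal.ofReal εc = 1 := by
              rw [← ENNReal.ofReal_add (by linarith [hεc.2]) hεc.1]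
              norm_num
            have h2 : P (G i) ≤ 1 := prob_le_one
            have h3 : ENNReal.ofReal (1 - εc) * P (G i) + ENNReal.ofReal εc
                ≥ ENNReal.ofReal (1 - εc) * P (G i) + ENNReal.ofReal εc * P (G i) := by
              gcongr
              exact mul_le_of_le_one_right' h2
            rw [← add_mul, h1, one_mul] at h3
            exact absurd (lt_of_le_of_lt h3 h) (lt_irrefl _)
      _ ≤ P (G i ∩ {ω | (S ω, Y ω) ∈ C}) + ENNReal.ofReal εc := by gcongr
      _ ≤ P (G (i+1)) + ENNReal.ofReal εc := add_le_add_left (measure_mono hsubset) _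
  -- main induction
  have hGall : ∀ i, i ≤ j → ENNReal.ofReal (1 - (j:ℝ)*ε - (i+1)*εc) ≤ P (G i) := by
    intro i
    induction i with
    | zero => intro _; simpa using hG0
    | succ i ih =>
      intro hij
      have hi : i < j := by omega
      have hIH := ih (le_of_lt hi)
      have h1 : ENNReal.ofReal (1 - (j:ℝ)*ε - ((i:ℝ)+1+1)*εc)
          = ENNReal.ofReal ((1 - (j:ℝ)*ε - ((i:ℝ)+1)*εc) - εc) := by ring_nf
      have h2 : ENNReal.ofReal ((1 - (j:ℝ)*ε - ((i:ℝ)+1)*εc) - εc)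
          = ENNReal.ofReal (1 - (j:ℝ)*ε - ((i:ℝ)+1)*εc) - ENNReal.ofReal εc :=
        ENNReal.ofReal_sub _ hεc.1
      have h3 : ENNReal.ofReal (1 - (j:ℝ)*ε - ((i:ℝ)+1)*εc) - ENNReal.ofReal εc
          ≤ P (G i) - ENNReal.ofReal εc := tsub_le_tsub_right hIH _
      have h4 : P (G i) - ENNReal.ofReal εc ≤ P (G (i+1)) :=
        tsub_le_iff_right.2 (hstep i hi)
      push_cast
      calc ENNReal.ofReal (1 - (j:ℝ)*ε - ((i:ℝ)+1+1)*εc) ≤ P (G i) - ENNReal.ofReal εc := by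
            rw [h1, h2]; exact h3
        _ ≤ P (G (i+1)) := h4
  -- conclusion part 1
  have hGj : G j ⊆ {ω | tout j ω - tout 0 ω ∈
      Set.Ioo ((j:ℝ) * μ - j * σc / 2) ((j:ℝ) * μ + j * σc / 2)} := by
    intro ω hω
    have hDl : ∀ i, i < j → tout (i+1) ω - tout i ω ∈ Set.Ioo (μ - σc/2) (μ + σc/2) := by
      intro i hi
      have hd := hGD j (i+1) (by omega) ω hω
      simp only [hD, Nat.succ_ne_zero, if_false, Nat.add_sub_cancel] at hd
      exact hd
    have htel : tout j ω - tout 0 ω = ∑ i ∈ Finset.range j, (tout (i+1) ω - tout i ω) :=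
      (Finset.sum_range_sub (fun i => tout i ω) j).symm
    have hne : (Finset.range j).Nonempty := Finset.nonempty_range_iff.2 (by omega)
    have hlo : (j:ℝ) * (μ - σc/2) < ∑ i ∈ Finset.range j, (tout (i+1) ω - tout i ω) := by
      have h' := Finset.sum_lt_sum_of_nonempty hne
        (fun i hi => (hDl i (Finset.mem_range.1 hi)).1)
      rwa [Finset.sum_const, Finset.card_range, nsmul_eq_mul] at h'
    have hhi : ∑ i ∈ Finset.range j, (tout (i+1) ω - tout i ω) < (j:ℝ) * (μ + σc/2) := by
      have h' := Finset.sum_lt_sum_of_nonempty hne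
        (fun i hi => (hDl i (Finset.mem_range.1 hi)).2)
      rwa [Finset.sum_const, Finset.card_range, nsmul_eq_mul] at h'
    simp only [Set.mem_setOf_eq, Set.mem_Ioo]
    rw [htel]
    constructor <;> [linarith; linarith]
  have part1 : ENNReal.ofReal (1 - (j:ℝ) * ε - ((j:ℝ) + 1) * εc) ≤
      P {ω | tout j ω - tout 0 ω ∈
        Set.Ioo ((j:ℝ) * μ - (j:ℝ) * σc / 2) ((j:ℝ) * μ + (j:ℝ) * σc / 2)} := by
    refine le_trans ?_ (measure_mono hGj)
    have := hGall j le_rfl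
    push_cast at this ⊢
    exact this
  refine ⟨part1, ?_, ?_⟩
  · -- part 2 : inaccuracy bound
    unfold inaccuracy
    have hjμ : 0 < (j:ℝ) * μ := mul_pos (by linarith) hμ
    have hjσc : 0 ≤ (j:ℝ) * σc := mul_nonneg (by linarith) (le_of_lt hσc.1)
    have hIcc : ENNReal.ofReal (1 - ((j:ℝ) * ε + ((j:ℝ)+1) * εc)) ≤
        P {ω | tout j ω - tout 0 ω ∈
          Set.Icc ((j:ℝ)*μ - (j:ℝ)*σc/2) ((j:ℝ)*μ + (j:ℝ)*σc/2)} := by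
      have hsub2 : {ω | tout j ω - tout 0 ω ∈
            Set.Ioo ((j:ℝ)*μ - (j:ℝ)*σc/2) ((j:ℝ)*μ + (j:ℝ)*σc/2)} ⊆
          {ω | tout j ω - tout 0 ω ∈
            Set.Icc ((j:ℝ)*μ - (j:ℝ)*σc/2) ((j:ℝ)*μ + (j:ℝ)*σc/2)} :=
        fun ω hω => Set.Ioo_subset_Icc_self hω
      refine le_trans (le_trans (le_of_eq ?_) part1) (measure_mono hsub2)
      congr 1; ring
    refine le_trans (iInf_le _ ((j:ℝ)*μ)) ?_
    refine le_trans (iInf_le _ ((j:ℝ)*σc)) ?_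
    refine le_trans (iInf_le _ hjμ) ?_
    refine le_trans (iInf_le _ hjσc) ?_
    refine le_trans (iInf_le _ hIcc) ?_
    refine le_of_eq ?_
    congr 1
    have hjne : (j:ℝ) ≠ 0 := by positivity
    field_simp
  · -- part 3 : arithmetic
    have h5 : 3 * τ ≤ 5 * ((j:ℝ) * σ) := by
      have h1 : μ ≤ (j:ℝ) * σ * ((m:ℝ) + 3/2) := by
        rw [div_le_iff₀ (by linarith : (0:ℝ) < (m:ℝ) + 3/2)] at hjσ
        linarith
      have h2 : ((m:ℝ) + 1/2) * τ ≤ (j:ℝ) * σ * ((m:ℝ) + 3/2) := by rw [← hμτ]; exact h1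
      nlinarith [hτ, hσ, hj1]
    have h6 : 5*(j:ℝ)^2/6 * (σ/μ) * (2*σc/τ) = (5*(j:ℝ)^2*σ*(2*σc))/(6*(μ*τ)) := by
      rw [div_mul_div_comm, div_mul_div_comm]; ring
    rw [h6, div_le_div_iff₀ hμ (by nlinarith [mul_pos hμ hτ] : (0:ℝ) < 6*(μ*τ))]
    nlinarith [mul_le_mul_of_nonneg_left h5
      (mul_nonneg (mul_nonneg (mul_nonneg (by norm_num : (0:ℝ) ≤ 2) (by linarith : (0:ℝ) ≤ (j:ℝ)))
        (le_of_lt hσc.1)) (le_of_lt hμ)), hσc.1, hμ, hτ, hj1]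
end

section
/- (Hoeffding confidence interval for the j-th tick of an i.i.d. clock.) Let X₁, …, X_j be i.i.d. real-valued random variables, and let μ₁ ∈ ℝ, σ₁ > 0, ε ∈ [0,1) be such that the interval C₁ = [μ₁ − σ₁/2, μ₁ + σ₁/2] satisfies P(X₁ ∈ C₁) ≥ 1 − ε (in particular P(X₁ ∈ C₁) > 0). Let μ' = E[X₁ | X₁ ∈ C₁] denote the conditional expectation of X₁ given the event {X₁ ∈ C₁}. Then for every real n > 0, P( X₁ + ⋯ + X_j ∈ [ j·μ' − n·√j·σ₁/2 , j·μ' + n·√j·σ₁/2 ] ) ≥ (1 − ε)^j · (1 − 2·e^{−n²/2}). -/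
open MeasureTheory ProbabilityTheory


/-- Core analytic inequality behind Hoeffding's lemma. -/
lemma hoeffding_aux_ineq (p h : ℝ) (hp0 : 0 ≤ p) (hp1 : p ≤ 1) :
    1 - p + p * Real.exp h ≤ Real.exp (p * h + h ^ 2 / 8) := by
  rcases eq_or_lt_of_le hp0 with hp | hp
  · subst hp
    simpa using Real.one_le_exp (by positivity)
  have hg_pos : ∀ x : ℝ, 0 < 1 - p + p * Real.exp x := fun x =>
    add_pos_of_nonneg_of_pos (by linarith) (by positivity)
  set F : ℝ → ℝ := fun x => p * x + x ^ 2 / 8 - Real.log (1 - p + p * Real.exp x) with hFdef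
  set F' : ℝ → ℝ := fun x => p + x / 4 - p * Real.exp x / (1 - p + p * Real.exp x) with hF'def
  have hg : ∀ x : ℝ, HasDerivAt (fun x => 1 - p + p * Real.exp x) (p * Real.exp x) x := fun x =>
    ((Real.hasDerivAt_exp x).const_mul p).const_add (1 - p)
  have hF : ∀ x, HasDerivAt F (F' x) x := by
    intro x
    have h1 : HasDerivAt (fun x : ℝ => p * x + x ^ 2 / 8) (p + x / 4) x := by
      have := ((hasDerivAt_pow 2 x).div_const 8).const_add (p * x)
      have h2 := ((hasDerivAt_id x).const_mul p).add ((hasDerivAt_pow 2 x).div_const 8)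
      convert h2 using 1
      · rfl
      · rfl
      · rfl
      · ring
    have h2 : HasDerivAt (fun x => Real.log (1 - p + p * Real.exp x))
        (p * Real.exp x / (1 - p + p * Real.exp x)) x := (hg x).log (hg_pos x).ne'
    exact h1.sub h2
  have hF' : ∀ x, HasDerivAt F' (1 / 4 - p * Real.exp x * (1 - p) / (1 - p + p * Real.exp x) ^ 2) x := by
    intro x
    have h1 : HasDerivAt (fun x : ℝ => p + x / 4) (1 / 4) x := by
      simpa using ((hasDerivAt_id x).div_const 4).const_add p
    have h2 : HasDerivAt (fun x => p * Real.exp x / (1 - p + p * Real.exp x))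
        ((p * Real.exp x * (1 - p + p * Real.exp x) - p * Real.exp x * (p * Real.exp x)) /
          (1 - p + p * Real.exp x) ^ 2) x :=
      ((Real.hasDerivAt_exp x).const_mul p).div (hg x) (hg_pos x).ne'
    have h3 := h1.sub h2
    convert h3 using 1
    · rfl
    · rfl
    · rfl
    have : p * Real.exp x * (1 - p + p * Real.exp x) - p * Real.exp x * (p * Real.exp x)
        = p * Real.exp x * (1 - p) := by ring
    rw [this]
  have hF''_nonneg : ∀ x : ℝ, 0 ≤ 1 / 4 - p * Real.exp x * (1 - p) / (1 - p + p * Real.exp x) ^ 2 := by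
    intro x
    rw [sub_nonneg, div_le_iff₀ (pow_pos (hg_pos x) 2)]
    nlinarith [sq_nonneg (1 - p - p * Real.exp x)]
  have hF'mono : Monotone F' :=
    monotone_of_deriv_nonneg (fun x => (hF' x).differentiableAt)
      (fun x => by rw [(hF' x).deriv]; exact hF''_nonneg x)
  have hF'0 : F' 0 = 0 := by
    simp only [hF'def]
    norm_num [Real.exp_zero]
  have hF0 : F 0 = 0 := by
    simp only [hFdef]
    norm_num [Real.exp_zero]
  have hFcont : Continuous F := by
    have : Differentiable ℝ F := fun x => (hF x).differentiableAt
    exact this.continuous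
  have hFnonneg : ∀ x : ℝ, 0 ≤ F x := by
    intro x
    rcases le_total 0 x with hx | hx
    · have hmono : MonotoneOn F (Set.Ici (0 : ℝ)) := by
        apply monotoneOn_of_deriv_nonneg (convex_Ici 0) hFcont.continuousOn
        · exact fun x _ => (hF x).differentiableAt.differentiableWithinAt
        · intro y hy
          rw [(hF y).deriv, ← hF'0]
          exact hF'mono (le_of_lt (by simpa using hy))
      have := hmono (Set.self_mem_Ici) (Set.mem_Ici.2 hx) hx
      rwa [hF0] at this
    · have hanti : AntitoneOn F (Set.Iic (0 : ℝ)) := by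
        apply antitoneOn_of_deriv_nonpos (convex_Iic 0) hFcont.continuousOn
        · exact fun x _ => (hF x).differentiableAt.differentiableWithinAt
        · intro y hy
          rw [(hF y).deriv, ← hF'0]
          exact hF'mono (le_of_lt (by simpa using hy))
      have := hanti (Set.mem_Iic.2 hx) (Set.self_mem_Iic) hx
      rwa [hF0] at this
  have hh := hFnonneg h
  have hlog : Real.log (1 - p + p * Real.exp h) ≤ p * h + h ^ 2 / 8 := by
    simp only [hFdef] at hh; linarith
  calc 1 - p + p * Real.exp h = Real.exp (Real.log (1 - p + p * Real.exp h)) :=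
        (Real.exp_log (hg_pos h)).symm
    _ ≤ Real.exp (p * h + h ^ 2 / 8) := Real.exp_le_exp.2 hlog


lemma lintegral_finset_prod_of_iIndepFun {Ω : Type*} [MeasurableSpace Ω] (P : Measure Ω)
    [IsProbabilityMeasure P] (Y : ℕ → Ω → ENNReal) (hYmeas : ∀ i, Measurable (Y i))
    (hYindep : iIndepFun Y P) (s : Finset ℕ) :
    ∫⁻ ω, ∏ i ∈ s, Y i ω ∂P = ∏ i ∈ s, ∫⁻ ω, Y i ω ∂P := by
  classical
  induction' s using Finset.induction_on with i s hi ih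
  · simp
  · simp only [Finset.prod_insert hi]
    rw [← ih]
    have hI : IndepFun (Y i) (∏ k ∈ s, Y k) P :=
      (hYindep.indepFun_finsetProd_of_notMem hYmeas hi).symm
    have hfun : (fun ω => ∏ k ∈ s, Y k ω) = ∏ k ∈ s, Y k := by
      ext ω; simp [Finset.prod_apply]
    have hI' : IndepFun (Y i) (fun ω => ∏ k ∈ s, Y k ω) P := by rw [hfun]; exact hI
    have hmeasp : Measurable (fun ω => ∏ k ∈ s, Y k ω) := by
      exact Finset.measurable_prod s (fun k _ => hYmeas k)
    exact lintegral_mul_eq_lintegral_mul_lintegral_of_indepFun''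
      (hYmeas i).aemeasurable hmeasp.aemeasurable hI'

lemma hoeffding_mgf_bound {Ω : Type*} [MeasurableSpace Ω] (P : Measure Ω)
    [IsProbabilityMeasure P] (X0 : Ω → ℝ) (hX0 : Measurable X0) (a b : ℝ) (hab : a < b)
    (m : ℝ) (hm : m = (P (X0 ⁻¹' Set.Icc a b)).toReal) (hm_pos : 0 < m)
    (μ' : ℝ) (hμ' : μ' = (∫ ω in X0 ⁻¹' Set.Icc a b, X0 ω ∂P) / m) (t : ℝ) :
    ∫ ω, (Set.Icc a b).indicator (fun x => Real.exp (t * x)) (X0 ω) ∂P ≤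
      m * Real.exp (t * μ' + t ^ 2 * (b - a) ^ 2 / 8) := by
  set A0 : Set Ω := X0 ⁻¹' Set.Icc a b with hA0def
  have hA : MeasurableSet A0 := hX0 measurableSet_Icc
  have hba : (0:ℝ) < b - a := by linarith
  -- integrability of X0 on A0
  have hXint : IntegrableOn X0 A0 P := by
    refine Integrable.mono' (integrable_const (max |a| |b|)) hX0.aestronglyMeasurable ?_
    refine (ae_restrict_iff' hA).2 (ae_of_all _ fun ω hω => ?_)
    rw [Real.norm_eq_abs]
    exact abs_le_max_abs_abs hω.1 hω.2
  set I : ℝ := ∫ ω in A0, X0 ω ∂P with hIdef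
  have hI : I = m * μ' := by rw [hμ']; field_simp
  have hma : m * a ≤ I := by
    have h1 : ∫ ω in A0, a ∂P ≤ I := by
      refine setIntegral_mono_on (integrableOn_const)
        hXint hA (fun ω hω => hω.1)
    rwa [setIntegral_const, smul_eq_mul, measureReal_def, ← hm] at h1
  have hmb : I ≤ m * b := by
    have h1 : I ≤ ∫ ω in A0, b ∂P := by
      refine setIntegral_mono_on hXint (integrableOn_const)
        hA (fun ω hω => hω.2)
    rwa [setIntegral_const, smul_eq_mul, measureReal_def, ← hm] at h1
  have hμ'a : a ≤ μ' := by
    rw [hμ']; rw [le_div_iff₀ hm_pos]; linarith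
  have hμ'b : μ' ≤ b := by
    rw [hμ']; rw [div_le_iff₀ hm_pos]; linarith
  -- rewrite LHS as a set integral
  have hrw : ∫ ω, (Set.Icc a b).indicator (fun x => Real.exp (t * x)) (X0 ω) ∂P =
      ∫ ω in A0, Real.exp (t * X0 ω) ∂P := by
    have heq : (fun ω => (Set.Icc a b).indicator (fun x => Real.exp (t * x)) (X0 ω)) =
        A0.indicator (fun ω => Real.exp (t * X0 ω)) := by
      ext ω
      by_cases hω : X0 ω ∈ Set.Icc a b
      · rw [Set.indicator_of_mem hω, Set.indicator_of_mem (show ω ∈ A0 from hω)]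
      · rw [Set.indicator_of_notMem hω, Set.indicator_of_notMem (show ω ∉ A0 from hω)]
    rw [heq, integral_indicator hA]
  -- integrability of exp and the affine bound on A0
  have hint1 : IntegrableOn (fun ω => Real.exp (t * X0 ω)) A0 P := by
    refine Integrable.mono' (integrable_const (max (Real.exp (t * a)) (Real.exp (t * b))))
      ((hX0.const_mul t).exp).aestronglyMeasurable ?_
    refine (ae_restrict_iff' hA).2 (ae_of_all _ fun ω hω => ?_)
    rw [Real.norm_eq_abs, abs_of_pos (Real.exp_pos _)]
    rcases le_total 0 t with ht | ht
    · exact le_max_of_le_right (Real.exp_le_exp.2 (mul_le_mul_of_nonneg_left hω.2 ht))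
    · exact le_max_of_le_left (Real.exp_le_exp.2 (mul_le_mul_of_nonpos_left hω.1 ht))
  have hint2 : IntegrableOn
      (fun ω => ((b - X0 ω) * Real.exp (t * a) + (X0 ω - a) * Real.exp (t * b)) / (b - a))
      A0 P := by
    apply Integrable.div_const
    exact (((integrable_const b).sub hXint).mul_const _).add
      ((hXint.sub (integrable_const a)).mul_const _)
  -- pointwise convexity bound
  have hconvex : ∀ ω ∈ A0, Real.exp (t * X0 ω) ≤
      ((b - X0 ω) * Real.exp (t * a) + (X0 ω - a) * Real.exp (t * b)) / (b - a) := by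
    intro ω hω
    obtain ⟨hx1, hx2⟩ := (Set.mem_preimage.1 hω : X0 ω ∈ Set.Icc a b)
    set x := X0 ω
    have hθ1 : (0:ℝ) ≤ (b - x) / (b - a) := div_nonneg (by linarith) hba.le
    have hθ2 : (0:ℝ) ≤ (x - a) / (b - a) := div_nonneg (by linarith) hba.le
    have hθsum : (b - x) / (b - a) + (x - a) / (b - a) = 1 := by field_simp; ring
    have hcv := convexOn_exp.2 (Set.mem_univ (t * a)) (Set.mem_univ (t * b)) hθ1 hθ2 hθsum
    have harg : ((b - x) / (b - a)) • (t * a) + ((x - a) / (b - a)) • (t * b) = t * x := by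
      simp only [smul_eq_mul]; field_simp; ring
    rw [harg] at hcv
    calc Real.exp (t * x) ≤ (b - x) / (b - a) * Real.exp (t * a)
          + (x - a) / (b - a) * Real.exp (t * b) := by simpa [smul_eq_mul] using hcv
      _ = ((b - x) * Real.exp (t * a) + (x - a) * Real.exp (t * b)) / (b - a) := by ring
  -- integrate the bound
  have hstep : ∫ ω in A0, Real.exp (t * X0 ω) ∂P ≤
      ((m * b - I) * Real.exp (t * a) + (I - m * a) * Real.exp (t * b)) / (b - a) := by
    refine le_trans (setIntegral_mono_on hint1 hint2 hA hconvex) (le_of_eq ?_)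
    have hib : Integrable (fun ω => b - X0 ω) (P.restrict A0) := by
      exact (integrable_const b).sub hXint
    have hia : Integrable (fun ω => X0 ω - a) (P.restrict A0) := by
      exact hXint.sub (integrable_const a)
    rw [integral_div]
    congr 1
    rw [integral_add (hib.mul_const _) (hia.mul_const _), integral_mul_const, integral_mul_const,
      integral_sub (integrable_const b) hXint, integral_sub hXint (integrable_const a),
      setIntegral_const, setIntegral_const, smul_eq_mul, smul_eq_mul, measureReal_def, ← hm]
  -- apply the analytic inequality
  have hp0 : 0 ≤ (μ' - a) / (b - a) := div_nonneg (by linarith) hba.le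
  have hp1 : (μ' - a) / (b - a) ≤ 1 := by rw [div_le_one hba]; linarith
  have haux := hoeffding_aux_ineq ((μ' - a) / (b - a)) (t * (b - a)) hp0 hp1
  have hfinal : ((m * b - I) * Real.exp (t * a) + (I - m * a) * Real.exp (t * b)) / (b - a) ≤
      m * Real.exp (t * μ' + t ^ 2 * (b - a) ^ 2 / 8) := by
    have hmul := mul_le_mul_of_nonneg_right haux (Real.exp_pos (t * a)).le
    have he1 : Real.exp (t * (b - a)) * Real.exp (t * a) = Real.exp (t * b) := by
      rw [← Real.exp_add]; congr 1; ring
    have he2 : Real.exp ((μ' - a) / (b - a) * (t * (b - a)) + (t * (b - a)) ^ 2 / 8) *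
        Real.exp (t * a) = Real.exp (t * μ' + t ^ 2 * (b - a) ^ 2 / 8) := by
      rw [← Real.exp_add]
      congr 1
      field_simp
      ring
    have hlhs : (1 - (μ' - a) / (b - a) + (μ' - a) / (b - a) * Real.exp (t * (b - a))) *
        Real.exp (t * a) =
        ((b - μ') * Real.exp (t * a) + (μ' - a) * Real.exp (t * b)) / (b - a) := by
      rw [← he1]
      field_simp
      ring
    rw [hlhs, he2] at hmul
    have hIrw : (m * b - I) = m * (b - μ') := by rw [hI]; ring
    have hIrw2 : (I - m * a) = m * (μ' - a) := by rw [hI]; ring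
    rw [hIrw, hIrw2]
    calc (m * (b - μ') * Real.exp (t * a) + m * (μ' - a) * Real.exp (t * b)) / (b - a)
        = m * (((b - μ') * Real.exp (t * a) + (μ' - a) * Real.exp (t * b)) / (b - a)) := by ring
      _ ≤ m * Real.exp (t * μ' + t ^ 2 * (b - a) ^ 2 / 8) :=
          mul_le_mul_of_nonneg_left hmul hm_pos.le
  rw [hrw]
  exact hstep.trans hfinal

lemma hoeffding_side {Ω : Type*} [MeasurableSpace Ω] (P : Measure Ω)
    [IsProbabilityMeasure P] (X : ℕ → Ω → ℝ) (j : ℕ) (hmeas : ∀ k, Measurable (X k))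
    (hindep : iIndepFun X P)
    (hident : ∀ k, IdentDistrib (X k) (X 0) P P)
    (a b : ℝ) (hab : a < b) (m : ℝ) (hm : m = (P (X 0 ⁻¹' Set.Icc a b)).toReal)
    (hm_pos : 0 < m)
    (μ' : ℝ) (hμ' : μ' = (∫ ω in X 0 ⁻¹' Set.Icc a b, X 0 ω ∂P) / m)
    (t c : ℝ) (B : Set Ω) (hB : MeasurableSet B)
    (hBle : ∀ ω ∈ B, t * c ≤ t * ∑ i ∈ Finset.range j, X i ω) :
    P ((⋂ i ∈ Finset.range j, X i ⁻¹' Set.Icc a b) ∩ B) ≤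
      ENNReal.ofReal (Real.exp (-(t * c)) *
        (m * Real.exp (t * μ' + t ^ 2 * (b - a) ^ 2 / 8)) ^ j) := by
  classical
  set C : Set ℝ := Set.Icc a b with hCdef
  set g : ℝ → ENNReal := fun x => ENNReal.ofReal (C.indicator (fun y => Real.exp (t * y)) x)
    with hgdef
  have hg : Measurable g :=
    ENNReal.measurable_ofReal.comp (((measurable_id.const_mul t).exp).indicator measurableSet_Icc)
  set AA : Set Ω := ⋂ i ∈ Finset.range j, X i ⁻¹' C with hAAdef
  have hAA : MeasurableSet AA :=
    MeasurableSet.biInter (Set.to_countable _) (fun i _ => hmeas i measurableSet_Icc)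
  set S : Ω → ℝ := fun ω => ∑ i ∈ Finset.range j, X i ω with hSdef
  -- pointwise bound
  have hpt : ∀ ω, (AA ∩ B).indicator (1 : Ω → ENNReal) ω ≤
      ENNReal.ofReal (Real.exp (-(t * c))) * ∏ i ∈ Finset.range j, g (X i ω) := by
    intro ω
    by_cases hω : ω ∈ AA ∩ B
    · rw [Set.indicator_of_mem hω, Pi.one_apply]
      have hωA : ∀ i ∈ Finset.range j, X i ω ∈ C := by
        intro i hi
        exact Set.mem_preimage.1 (Set.mem_iInter₂.1 hω.1 i hi)
      have hprod : ∏ i ∈ Finset.range j, g (X i ω) =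
          ENNReal.ofReal (Real.exp (t * S ω)) := by
        have heach : ∀ i ∈ Finset.range j, g (X i ω) = ENNReal.ofReal (Real.exp (t * X i ω)) := by
          intro i hi
          simp only [hgdef]
          rw [Set.indicator_of_mem (hωA i hi)]
        rw [Finset.prod_congr rfl heach,
          ← ENNReal.ofReal_prod_of_nonneg (fun i _ => (Real.exp_pos _).le),
          ← Real.exp_sum, ← Finset.mul_sum]
      rw [hprod, ← ENNReal.ofReal_mul (Real.exp_pos _).le, ← Real.exp_add]
      refine ENNReal.one_le_ofReal.2 (Real.one_le_exp ?_)
      have := hBle ω hω.2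
      simp only [hSdef]
      linarith
    · rw [Set.indicator_of_notMem hω]
      exact zero_le
  have hprodmeas : Measurable (fun ω => ∏ i ∈ Finset.range j, g (X i ω)) :=
    Finset.measurable_prod _ (fun i _ => hg.comp (hmeas i))
  -- bound on the single-variable lintegral
  have hval : ∫⁻ ω, g (X 0 ω) ∂P ≤
      ENNReal.ofReal (m * Real.exp (t * μ' + t ^ 2 * (b - a) ^ 2 / 8)) := by
    have heq : (fun ω => C.indicator (fun y => Real.exp (t * y)) (X 0 ω)) =
        (X 0 ⁻¹' C).indicator (fun ω => Real.exp (t * X 0 ω)) := by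
      ext ω
      by_cases hω : X 0 ω ∈ C
      · rw [Set.indicator_of_mem hω, Set.indicator_of_mem (show ω ∈ X 0 ⁻¹' C from hω)]
      · rw [Set.indicator_of_notMem hω, Set.indicator_of_notMem (show ω ∉ X 0 ⁻¹' C from hω)]
    have hintOn : IntegrableOn (fun ω => Real.exp (t * X 0 ω)) (X 0 ⁻¹' C) P := by
      refine Integrable.mono' (integrable_const (max (Real.exp (t * a)) (Real.exp (t * b))))
        (((hmeas 0).const_mul t).exp).aestronglyMeasurable ?_
      refine (ae_restrict_iff' ((hmeas 0) measurableSet_Icc)).2 (ae_of_all _ fun ω hω => ?_)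
      rw [Real.norm_eq_abs, abs_of_pos (Real.exp_pos _)]
      rcases le_total 0 t with ht | ht
      · exact le_max_of_le_right (Real.exp_le_exp.2 (mul_le_mul_of_nonneg_left hω.2 ht))
      · exact le_max_of_le_left (Real.exp_le_exp.2 (mul_le_mul_of_nonpos_left hω.1 ht))
    have hint1 : Integrable (fun ω => C.indicator (fun y => Real.exp (t * y)) (X 0 ω)) P := by
      rw [heq]
      exact (integrable_indicator_iff ((hmeas 0) measurableSet_Icc)).2 hintOn
    have hnn : 0 ≤ᵐ[P] fun ω => C.indicator (fun y => Real.exp (t * y)) (X 0 ω) :=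
      ae_of_all _ fun ω => Set.indicator_nonneg (fun y _ => (Real.exp_pos _).le) _
    have hlift := (ofReal_integral_eq_lintegral_ofReal hint1 hnn).symm
    calc ∫⁻ ω, g (X 0 ω) ∂P
        = ENNReal.ofReal (∫ ω, C.indicator (fun y => Real.exp (t * y)) (X 0 ω) ∂P) := hlift
      _ ≤ ENNReal.ofReal (m * Real.exp (t * μ' + t ^ 2 * (b - a) ^ 2 / 8)) :=
          ENNReal.ofReal_le_ofReal
            (hoeffding_mgf_bound P (X 0) (hmeas 0) a b hab m hm hm_pos μ' hμ' t)

  -- main chain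
  calc P (AA ∩ B)
      = ∫⁻ ω, (AA ∩ B).indicator (1 : Ω → ENNReal) ω ∂P :=
        (lintegral_indicator_one (hAA.inter hB)).symm
    _ ≤ ∫⁻ ω, ENNReal.ofReal (Real.exp (-(t * c))) *
          ∏ i ∈ Finset.range j, g (X i ω) ∂P := lintegral_mono hpt
    _ = ENNReal.ofReal (Real.exp (-(t * c))) *
          ∫⁻ ω, ∏ i ∈ Finset.range j, g (X i ω) ∂P := lintegral_const_mul _ hprodmeas
    _ = ENNReal.ofReal (Real.exp (-(t * c))) *
          ∏ i ∈ Finset.range j, ∫⁻ ω, g (X i ω) ∂P := by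
        rw [lintegral_finset_prod_of_iIndepFun P (fun i ω => g (X i ω))
          (fun i => hg.comp (hmeas i)) (hindep.comp (fun _ => g) (fun _ => hg))
          (Finset.range j)]
    _ = ENNReal.ofReal (Real.exp (-(t * c))) *
          ∏ i ∈ Finset.range j, ∫⁻ ω, g (X 0 ω) ∂P := by
        congr 1
        refine Finset.prod_congr rfl fun i _ => ?_
        rw [← lintegral_map hg (hmeas i), (hident i).map_eq, lintegral_map hg (hmeas 0)]
    _ = ENNReal.ofReal (Real.exp (-(t * c))) * (∫⁻ ω, g (X 0 ω) ∂P) ^ j := by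
        rw [Finset.prod_const, Finset.card_range]
    _ ≤ ENNReal.ofReal (Real.exp (-(t * c))) *
          (ENNReal.ofReal (m * Real.exp (t * μ' + t ^ 2 * (b - a) ^ 2 / 8))) ^ j := by
        gcongr
    _ = ENNReal.ofReal (Real.exp (-(t * c)) *
          (m * Real.exp (t * μ' + t ^ 2 * (b - a) ^ 2 / 8)) ^ j) := by
        rw [← ENNReal.ofReal_pow (mul_nonneg hm_pos.le (Real.exp_pos _).le),
          ← ENNReal.ofReal_mul (Real.exp_pos _).le]

/-- **Hoeffding confidence interval for the `j`-th tick of an i.i.d. clock.**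
Let `X₁, …, X_j` be i.i.d. real random variables and let `μ₁ ∈ ℝ`, `σ₁ > 0`,
`ε ∈ [0,1)` be such that the interval `C₁ = [μ₁ − σ₁/2, μ₁ + σ₁/2]` satisfies
`P(X₁ ∈ C₁) ≥ 1 − ε` (in particular `P(X₁ ∈ C₁) > 0`).  Let
`μ' = E[X₁ | X₁ ∈ C₁]` be the conditional expectation of `X₁` given `{X₁ ∈ C₁}`.
Then for every real `n > 0`,
`P(X₁ + ⋯ + X_j ∈ [j·μ' − n·√j·σ₁/2, j·μ' + n·√j·σ₁/2]) ≥ (1 − ε)^j·(1 − 2e^{−n²/2})`. -/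
theorem hoeffding_confidence_interval {Ω : Type*} [MeasurableSpace Ω]
    (P : Measure Ω) [IsProbabilityMeasure P] (X : ℕ → Ω → ℝ) (j : ℕ) (hj : 1 ≤ j)
    (hmeas : ∀ k, Measurable (X k))
    (hindep : iIndepFun X P)
    (hident : ∀ k, IdentDistrib (X k) (X 0) P P)
    (μ₁ σ₁ ε : ℝ) (hσ₁ : 0 < σ₁) (hε : ε ∈ Set.Ico (0 : ℝ) 1)
    (hconf : ENNReal.ofReal (1 - ε) ≤
      P {ω | X 0 ω ∈ Set.Icc (μ₁ - σ₁ / 2) (μ₁ + σ₁ / 2)})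
    (μ' : ℝ)
    (hμ' : μ' = (∫ ω in {ω | X 0 ω ∈ Set.Icc (μ₁ - σ₁ / 2) (μ₁ + σ₁ / 2)}, X 0 ω ∂P) /
      (P {ω | X 0 ω ∈ Set.Icc (μ₁ - σ₁ / 2) (μ₁ + σ₁ / 2)}).toReal)
    (n : ℝ) (hn : 0 < n) :
    ENNReal.ofReal ((1 - ε) ^ j * (1 - 2 * Real.exp (-n ^ 2 / 2))) ≤
      P {ω | (∑ i ∈ Finset.range j, X i ω) ∈
        Set.Icc (j * μ' - n * Real.sqrt j * σ₁ / 2)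
          (j * μ' + n * Real.sqrt j * σ₁ / 2)} := by
  
  classical
  obtain ⟨hε0, hε1⟩ := hε
  set a : ℝ := μ₁ - σ₁ / 2 with hadef
  set b : ℝ := μ₁ + σ₁ / 2 with hbdef
  have hab : a < b := by rw [hadef, hbdef]; linarith
  have hba : b - a = σ₁ := by rw [hadef, hbdef]; ring
  set E : ℝ := Real.exp (-n ^ 2 / 2) with hEdef
  have hEpos : 0 < E := Real.exp_pos _
  by_cases hEc : 1 - 2 * E ≤ 0
  · have : (1 - ε) ^ j * (1 - 2 * E) ≤ 0 :=
      mul_nonpos_of_nonneg_of_nonpos (pow_nonneg (by linarith) j) hEc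
    rw [ENNReal.ofReal_eq_zero.2 this]
    exact zero_le
  push_neg at hEc
  -- basic facts about m
  have hpre : {ω | X 0 ω ∈ Set.Icc a b} = X 0 ⁻¹' Set.Icc a b := rfl
  set m : ℝ := (P (X 0 ⁻¹' Set.Icc a b)).toReal with hmdef
  have hεm : 1 - ε ≤ m := by
    have h1 : (ENNReal.ofReal (1 - ε)).toReal ≤ (P (X 0 ⁻¹' Set.Icc a b)).toReal :=
      ENNReal.toReal_mono (measure_ne_top P _) (by rw [← hpre]; exact hconf)
    rwa [ENNReal.toReal_ofReal (by linarith)] at h1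
  have hm_pos : 0 < m := lt_of_lt_of_le (by linarith) hεm
  have hμ'2 : μ' = (∫ ω in X 0 ⁻¹' Set.Icc a b, X 0 ω ∂P) / m := hμ'
  -- the intersection event and its probability
  set AA : Set Ω := ⋂ i ∈ Finset.range j, X i ⁻¹' Set.Icc a b with hAAdef
  have hPA : P AA = ENNReal.ofReal (m ^ j) := by
    have h := hindep.measure_inter_preimage_eq_mul (S := Finset.range j)
      (sets := fun _ => Set.Icc a b) (fun i _ => measurableSet_Icc)
    have heach : ∀ i, P (X i ⁻¹' Set.Icc a b) = P (X 0 ⁻¹' Set.Icc a b) := by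
      intro i
      rw [← Measure.map_apply (hmeas i) measurableSet_Icc, (hident i).map_eq,
        Measure.map_apply (hmeas 0) measurableSet_Icc]
    calc P AA = ∏ i ∈ Finset.range j, P (X i ⁻¹' Set.Icc a b) := h
      _ = ∏ i ∈ Finset.range j, P (X 0 ⁻¹' Set.Icc a b) :=
          Finset.prod_congr rfl fun i _ => heach i
      _ = (P (X 0 ⁻¹' Set.Icc a b)) ^ j := by rw [Finset.prod_const, Finset.card_range]
      _ = (ENNReal.ofReal m) ^ j := by rw [hmdef, ENNReal.ofReal_toReal (measure_ne_top P _)]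
      _ = ENNReal.ofReal (m ^ j) := (ENNReal.ofReal_pow hm_pos.le j).symm
  -- deviation parameters
  have hj0 : (0:ℝ) < (j:ℝ) := by exact_mod_cast hj
  have hsqrtj : Real.sqrt (j:ℝ) ^ 2 = (j:ℝ) := Real.sq_sqrt hj0.le
  have hsqrtpos : 0 < Real.sqrt (j:ℝ) := Real.sqrt_pos.2 hj0
  set s0 : ℝ := n * Real.sqrt (j:ℝ) * σ₁ / 2 with hs0def
  have hs0 : 0 < s0 := by rw [hs0def]; positivity
  set t0 : ℝ := 4 * s0 / ((j:ℝ) * σ₁ ^ 2) with ht0def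
  have ht0 : 0 < t0 := by rw [ht0def]; positivity
  have hs0sq : s0 ^ 2 = n ^ 2 * (j:ℝ) * σ₁ ^ 2 / 4 := by
    have : s0 ^ 2 = n ^ 2 * Real.sqrt (j:ℝ) ^ 2 * σ₁ ^ 2 / 4 := by rw [hs0def]; ring
    rw [this, hsqrtj]
  have h1 : t0 * s0 = n ^ 2 := by
    have ht : t0 * s0 = 4 * s0 ^ 2 / ((j:ℝ) * σ₁ ^ 2) := by rw [ht0def]; ring
    rw [ht, hs0sq]
    field_simp
  have h2 : (j:ℝ) * t0 ^ 2 * σ₁ ^ 2 / 8 = n ^ 2 / 2 := by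
    have ht : t0 ^ 2 = 16 * s0 ^ 2 / ((j:ℝ) * σ₁ ^ 2) ^ 2 := by rw [ht0def]; ring
    rw [ht, hs0sq]
    field_simp
    ring
  -- the two tail events
  set Ssum : Ω → ℝ := fun ω => ∑ i ∈ Finset.range j, X i ω with hSdef
  have hSmeas : Measurable Ssum := Finset.measurable_sum _ (fun i _ => hmeas i)
  set Bp : Set Ω := {ω | (j:ℝ) * μ' + s0 ≤ Ssum ω} with hBpdef
  set Bm : Set Ω := {ω | Ssum ω ≤ (j:ℝ) * μ' - s0} with hBmdef
  have hBp : MeasurableSet Bp := measurableSet_le measurable_const hSmeas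
  have hBm : MeasurableSet Bm := measurableSet_le hSmeas measurable_const
  have hexpo : -(t0 * ((j:ℝ) * μ' + s0)) + (j:ℝ) * (t0 * μ' + t0 ^ 2 * σ₁ ^ 2 / 8)
      = -n ^ 2 / 2 := by linear_combination -h1 + h2
  have hexpo' : -(-t0 * ((j:ℝ) * μ' - s0)) + (j:ℝ) * (-t0 * μ' + (-t0) ^ 2 * σ₁ ^ 2 / 8)
      = -n ^ 2 / 2 := by linear_combination -h1 + h2
  -- upper tail bound
  have hside_p : P (AA ∩ Bp) ≤ ENNReal.ofReal (m ^ j * E) := by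
    have hb := hoeffding_side P X j hmeas hindep hident a b hab m hmdef hm_pos μ' hμ'2
      t0 ((j:ℝ) * μ' + s0) Bp hBp
      (fun ω hω => mul_le_mul_of_nonneg_left hω ht0.le)
    refine hb.trans (le_of_eq ?_)
    rw [hba]
    congr 1
    calc Real.exp (-(t0 * ((j:ℝ) * μ' + s0))) *
          (m * Real.exp (t0 * μ' + t0 ^ 2 * σ₁ ^ 2 / 8)) ^ j
        = m ^ j * (Real.exp (-(t0 * ((j:ℝ) * μ' + s0))) *
            Real.exp ((j:ℝ) * (t0 * μ' + t0 ^ 2 * σ₁ ^ 2 / 8))) := by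
          rw [mul_pow, ← Real.exp_nat_mul]; ring
      _ = m ^ j * Real.exp (-(t0 * ((j:ℝ) * μ' + s0)) +
            (j:ℝ) * (t0 * μ' + t0 ^ 2 * σ₁ ^ 2 / 8)) := by rw [← Real.exp_add]
      _ = m ^ j * E := by rw [hexpo, hEdef]
  -- lower tail bound
  have hside_m : P (AA ∩ Bm) ≤ ENNReal.ofReal (m ^ j * E) := by
    have hb := hoeffding_side P X j hmeas hindep hident a b hab m hmdef hm_pos μ' hμ'2
      (-t0) ((j:ℝ) * μ' - s0) Bm hBm
      (fun ω hω => mul_le_mul_of_nonpos_left hω (neg_nonpos.2 ht0.le))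
    refine hb.trans (le_of_eq ?_)
    rw [hba]
    congr 1
    calc Real.exp (-(-t0 * ((j:ℝ) * μ' - s0))) *
          (m * Real.exp (-t0 * μ' + (-t0) ^ 2 * σ₁ ^ 2 / 8)) ^ j
        = m ^ j * (Real.exp (-(-t0 * ((j:ℝ) * μ' - s0))) *
            Real.exp ((j:ℝ) * (-t0 * μ' + (-t0) ^ 2 * σ₁ ^ 2 / 8))) := by
          rw [mul_pow, ← Real.exp_nat_mul]; ring
      _ = m ^ j * Real.exp (-(-t0 * ((j:ℝ) * μ' - s0)) +
            (j:ℝ) * (-t0 * μ' + (-t0) ^ 2 * σ₁ ^ 2 / 8)) := by rw [← Real.exp_add]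
      _ = m ^ j * E := by rw [hexpo', hEdef]
  -- put everything together
  set T : Set Ω := {ω | (∑ i ∈ Finset.range j, X i ω) ∈
      Set.Icc ((j:ℝ) * μ' - s0) ((j:ℝ) * μ' + s0)} with hTdef
  have hsub : AA ⊆ (AA ∩ Bp) ∪ (AA ∩ Bm) ∪ T := by
    intro ω hω
    by_cases hp : (j:ℝ) * μ' + s0 ≤ Ssum ω
    · exact Or.inl (Or.inl ⟨hω, hp⟩)
    by_cases hm' : Ssum ω ≤ (j:ℝ) * μ' - s0
    · exact Or.inl (Or.inr ⟨hω, hm'⟩)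
    · push_neg at hp hm'
      exact Or.inr ⟨le_of_lt hm', le_of_lt hp⟩
  have hchain : P AA ≤ P (AA ∩ Bp) + P (AA ∩ Bm) + P T :=
    calc P AA ≤ P ((AA ∩ Bp) ∪ (AA ∩ Bm) ∪ T) := measure_mono hsub
      _ ≤ P ((AA ∩ Bp) ∪ (AA ∩ Bm)) + P T := measure_union_le _ _
      _ ≤ P (AA ∩ Bp) + P (AA ∩ Bm) + P T := add_le_add_left (measure_union_le _ _) _
  have hreal : (1 - ε) ^ j * (1 - 2 * E) + (m ^ j * E + m ^ j * E) ≤ m ^ j := by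
    have hpow : (1 - ε) ^ j ≤ m ^ j := pow_le_pow_left₀ (by linarith) hεm j
    nlinarith [mul_nonneg (sub_nonneg.2 hpow) hEc.le]
  have hnn1 : 0 ≤ (1 - ε) ^ j * (1 - 2 * E) :=
    mul_nonneg (pow_nonneg (by linarith) j) hEc.le
  have hnn2 : 0 ≤ m ^ j * E := mul_nonneg (pow_nonneg hm_pos.le j) hEpos.le
  have hfin : ENNReal.ofReal ((1 - ε) ^ j * (1 - 2 * E)) +
      (ENNReal.ofReal (m ^ j * E) + ENNReal.ofReal (m ^ j * E)) ≤
      P T + (ENNReal.ofReal (m ^ j * E) + ENNReal.ofReal (m ^ j * E)) := by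
    calc ENNReal.ofReal ((1 - ε) ^ j * (1 - 2 * E)) +
          (ENNReal.ofReal (m ^ j * E) + ENNReal.ofReal (m ^ j * E))
        = ENNReal.ofReal ((1 - ε) ^ j * (1 - 2 * E) + (m ^ j * E + m ^ j * E)) := by
          rw [← ENNReal.ofReal_add hnn2 hnn2, ← ENNReal.ofReal_add hnn1 (by linarith)]
      _ ≤ ENNReal.ofReal (m ^ j) := ENNReal.ofReal_le_ofReal hreal
      _ = P AA := hPA.symm
      _ ≤ P (AA ∩ Bp) + P (AA ∩ Bm) + P T := hchain
      _ ≤ ENNReal.ofReal (m ^ j * E) + ENNReal.ofReal (m ^ j * E) + P T :=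
          add_le_add (add_le_add hside_p hside_m) le_rfl
      _ = P T + (ENNReal.ofReal (m ^ j * E) + ENNReal.ofReal (m ^ j * E)) := add_comm _ _
  exact (ENNReal.add_le_add_iff_right
    (ENNReal.add_ne_top.2 ⟨ENNReal.ofReal_ne_top, ENNReal.ofReal_ne_top⟩)).1 hfin
end
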